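/- Suppose there exists g with |g|_p = ψ(p) for all p ∈ (a,b) (a representation of ψ). Then the operator norm of the dilation σ_s on G(ψ; a, b) equals max(s^{1/a}, s^{1/b}) for every s > 0. -/

import Mathlib

open MeasureTheory Set ENNReal

/-- Grand Lebesgue functional on `(0,∞)` with Lebesgue measure. -/
noncomputable def GNorm (ψ : ℝ → ℝ) (a b : ℝ) (h : ℝ → ℝ) : ℝ≥0∞ :=
  ⨆ p ∈ Set.Ioo a b,
    eLpNorm h (ENNReal.ofReal p) (volume.restrict (Set.Ioi (0:ℝ))) / ENNReal.ofReal (ψ p)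

open Topology

lemma lintegral_Ioi_dilate (F : ℝ → ℝ≥0∞) {s : ℝ} (hs : 0 < s) :
    ∫⁻ x in Set.Ioi (0:ℝ), F (x / s) = ENNReal.ofReal s * ∫⁻ y in Set.Ioi (0:ℝ), F y := by
  have hs' : (s : ℝ)⁻¹ ≠ 0 := inv_ne_zero hs.ne'
  set e : ℝ ≃ᵐ ℝ := (Homeomorph.mulLeft₀ s⁻¹ hs').toMeasurableEquiv with he_def
  have he : ⇑e = fun x => s⁻¹ * x := rfl
  have hpre : e ⁻¹' (Set.Ioi 0) = Set.Ioi 0 := by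
    ext x
    simp only [Set.mem_preimage, he, Set.mem_Ioi]
    exact mul_pos_iff_of_pos_left (inv_pos.2 hs)
  have hmap : Measure.map e (volume.restrict (Set.Ioi (0:ℝ)))
      = ENNReal.ofReal s • volume.restrict (Set.Ioi (0:ℝ)) := by
    rw [← hpre, ← MeasurableEquiv.restrict_map e volume (Set.Ioi 0)]
    have : Measure.map e volume = ENNReal.ofReal s • volume := by
      rw [he]
      have := Real.map_volume_mul_left hs'
      rwa [inv_inv, abs_of_pos hs] at this
    rw [this, Measure.restrict_smul, hpre]
  calc ∫⁻ x in Set.Ioi (0:ℝ), F (x / s)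
      = ∫⁻ x in Set.Ioi (0:ℝ), F (e x) := by
        congr 1; ext x; rw [he]; rw [div_eq_inv_mul]
    _ = ∫⁻ y, F y ∂(Measure.map e (volume.restrict (Set.Ioi (0:ℝ)))) :=
        (MeasureTheory.lintegral_map_equiv F e).symm
    _ = ENNReal.ofReal s * ∫⁻ y in Set.Ioi (0:ℝ), F y := by
        rw [hmap, lintegral_smul_measure, smul_eq_mul]

lemma eLpNorm_dilate (f : ℝ → ℝ) {s : ℝ} (hs : 0 < s) {p : ℝ} (hp : 0 < p) :
    eLpNorm (fun x => f (x / s)) (ENNReal.ofReal p) (volume.restrict (Set.Ioi (0:ℝ)))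
      = ENNReal.ofReal (s ^ (1 / p))
        * eLpNorm f (ENNReal.ofReal p) (volume.restrict (Set.Ioi (0:ℝ))) := by
  have hp0 : ENNReal.ofReal p ≠ 0 := by simp [ENNReal.ofReal_eq_zero, not_le, hp]
  have hpt : (ENNReal.ofReal p).toReal = p := ENNReal.toReal_ofReal hp.le
  rw [eLpNorm_eq_lintegral_rpow_enorm_toReal hp0 ENNReal.ofReal_ne_top,
      eLpNorm_eq_lintegral_rpow_enorm_toReal hp0 ENNReal.ofReal_ne_top, hpt]
  have := lintegral_Ioi_dilate (fun y => ‖f y‖ₑ ^ p) hs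
  rw [this, ENNReal.mul_rpow_of_nonneg _ _ (by positivity : (0:ℝ) ≤ 1/p),
      ENNReal.ofReal_rpow_of_pos hs]

/-- If `ψ` admits a representation `|g|_p = ψ(p)`, then the operator norm of the
dilation `σ_s f = f(·/s)` on `G(ψ; a, b)` is exactly `max(s^{1/a}, s^{1/b})`. -/
theorem dilation_operator_norm
    (a b : ℝ) (ha : 1 ≤ a) (hab : a < b)
    (ψ : ℝ → ℝ) (hψc : ContinuousOn ψ (Set.Ioo a b))
    (hψpos : ∀ p ∈ Set.Ioo a b, 0 < ψ p)
    (g : ℝ → ℝ) (hg : Measurable g)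
    (hrep : ∀ p ∈ Set.Ioo a b,
      eLpNorm g (ENNReal.ofReal p) (volume.restrict (Set.Ioi (0:ℝ)))
        = ENNReal.ofReal (ψ p))
    (s : ℝ) (hs : 0 < s) :
    (⨆ (f : ℝ → ℝ) (_ : GNorm ψ a b f ≤ 1), GNorm ψ a b (fun x => f (x / s)))
      = ENNReal.ofReal (max (s ^ (1 / a)) (s ^ (1 / b))) := by
  have ha0 : (0:ℝ) < a := lt_of_lt_of_le one_pos ha
  have hppos : ∀ p ∈ Set.Ioo a b, (0:ℝ) < p := fun p hp => lt_trans ha0 hp.1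
  have hM : ∀ p ∈ Set.Ioo a b, s ^ (1/p) ≤ max (s ^ (1/a)) (s ^ (1/b)) := by
    intro p hp
    rcases le_or_gt 1 s with h1 | h1
    · exact le_max_of_le_left (Real.rpow_le_rpow_of_exponent_le h1
        (one_div_le_one_div_of_le ha0 hp.1.le))
    · exact le_max_of_le_right (Real.rpow_le_rpow_of_exponent_ge hs h1.le
        (one_div_le_one_div_of_le (hppos p hp) hp.2.le))
  refine le_antisymm (iSup₂_le fun f hf => ?_) ?_
  · refine iSup₂_le fun p hp => ?_
    rw [eLpNorm_dilate f hs (hppos p hp), mul_div_assoc]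
    calc ENNReal.ofReal (s ^ (1/p)) *
          (eLpNorm f (ENNReal.ofReal p) (volume.restrict (Set.Ioi (0:ℝ)))
            / ENNReal.ofReal (ψ p))
        ≤ ENNReal.ofReal (max (s ^ (1/a)) (s ^ (1/b))) * 1 := by
          refine mul_le_mul' (ENNReal.ofReal_le_ofReal (hM p hp)) (le_trans ?_ hf)
          exact le_iSup₂ (f := fun q (_ : q ∈ Set.Ioo a b) =>
            eLpNorm f (ENNReal.ofReal q) (volume.restrict (Set.Ioi (0:ℝ)))
              / ENNReal.ofReal (ψ q)) p hp
      _ = ENNReal.ofReal (max (s ^ (1/a)) (s ^ (1/b))) := mul_one _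
  · have hgnorm : GNorm ψ a b g ≤ 1 := by
      refine iSup₂_le fun p hp => ?_
      rw [hrep p hp]
      exact ENNReal.div_self_le_one
    refine le_trans ?_
      (le_iSup₂ (f := fun f (_ : GNorm ψ a b f ≤ 1) =>
        GNorm ψ a b fun x => f (x / s)) g hgnorm)
    have hterm : ∀ p ∈ Set.Ioo a b,
        ENNReal.ofReal (s ^ (1/p)) ≤ GNorm ψ a b (fun x => g (x / s)) := by
      intro p hp
      have hval : eLpNorm (fun x => g (x / s)) (ENNReal.ofReal p)
          (volume.restrict (Set.Ioi (0:ℝ))) / ENNReal.ofReal (ψ p)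
          = ENNReal.ofReal (s ^ (1/p)) := by
        rw [eLpNorm_dilate g hs (hppos p hp), hrep p hp, mul_div_assoc,
          ENNReal.div_self (ENNReal.ofReal_pos.2 (hψpos p hp)).ne' ENNReal.ofReal_ne_top,
          mul_one]
      rw [← hval]
      exact le_iSup₂ (f := fun q (_ : q ∈ Set.Ioo a b) =>
        eLpNorm (fun x => g (x / s)) (ENNReal.ofReal q) (volume.restrict (Set.Ioi (0:ℝ)))
          / ENNReal.ofReal (ψ q)) p hp
    have key : ∀ c ∈ Set.Icc a b,
        ENNReal.ofReal (s ^ (1/c)) ≤ GNorm ψ a b (fun x => g (x / s)) := by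
      intro c hc
      have hc0 : (0:ℝ) < c := lt_of_lt_of_le ha0 hc.1
      haveI hne : (𝓝[Set.Ioo a b] c).NeBot := by
        rw [← mem_closure_iff_nhdsWithin_neBot, closure_Ioo hab.ne]
        exact hc
      have hca : ContinuousAt (fun p : ℝ => ENNReal.ofReal (s ^ (1/p))) c := by
        refine ENNReal.continuous_ofReal.continuousAt.comp ?_
        exact (Real.continuousAt_const_rpow hs.ne').comp
          (continuousAt_const.div continuousAt_id hc0.ne')
      have hta : Filter.Tendsto (fun p : ℝ => ENNReal.ofReal (s ^ (1/p)))
          (𝓝[Set.Ioo a b] c) (𝓝 (ENNReal.ofReal (s ^ (1/c)))) :=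
        hca.tendsto.mono_left nhdsWithin_le_nhds
      exact le_of_tendsto hta (Filter.eventually_of_mem self_mem_nhdsWithin hterm)
    rcases max_choice (s ^ (1/a)) (s ^ (1/b)) with h | h <;> rw [h]
    · exact key a ⟨le_refl a, hab.le⟩
    · exact key b ⟨hab.le, le_refl b⟩
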